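/- arXiv:1807.05044 — 6 statements merged into one kernel-verified Lean document; each statement's English description precedes it below -/
import Mathlib

section
/- Let B₁ ∈ ℝ^{n₀×n₁}, V = [I;-I], B̂₁ = (B₁, -B₁), and Âₗ = (B̂₁⁻)^T B̂₁⁺ + (B̂₁⁺)^T B̂₁⁻. Then V^T Âₗ = -B₁^T B₁ V^T, i.e., Âₗ is a lifting of -B₁^T B₁. -/
open Matrix

/-- The lifting matrix `V = [I; -I]`. -/
noncomputable def liftV (n : ℕ) : Matrix (Fin n ⊕ Fin n) (Fin n) ℝ :=
  Matrix.of fun i j =>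
    match i with
    | Sum.inl a => if a = j then (1 : ℝ) else 0
    | Sum.inr a => if a = j then (-1 : ℝ) else 0

/-- Entrywise positive part. -/
def matPos {m k : Type*} (M : Matrix m k ℝ) : Matrix m k ℝ :=
  Matrix.of fun i j => max (M i j) 0

/-- Entrywise negative part. -/
def matNeg {m k : Type*} (M : Matrix m k ℝ) : Matrix m k ℝ :=
  Matrix.of fun i j => max (-M i j) 0

/-- With `B̂₁ = B₁Vᵀ` and `Âₗ = (B̂₁⁻)ᵀB̂₁⁺ + (B̂₁⁺)ᵀB̂₁⁻`, the matrix `Âₗ` is a lifting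
of `-B₁ᵀB₁`, i.e. `Vᵀ Âₗ = -B₁ᵀB₁ Vᵀ`. -/
theorem stmt_4 (n₀ n₁ : ℕ) (B₁ : Matrix (Fin n₀) (Fin n₁) ℝ) :
    (liftV n₁)ᵀ *
      ((matNeg (B₁ * (liftV n₁)ᵀ))ᵀ * matPos (B₁ * (liftV n₁)ᵀ) +
       (matPos (B₁ * (liftV n₁)ᵀ))ᵀ * matNeg (B₁ * (liftV n₁)ᵀ)) =
    (-(B₁ᵀ * B₁)) * (liftV n₁)ᵀ := by
  have hB : ∀ i c, (B₁ * (liftV n₁)ᵀ) i c =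
      Sum.elim (fun a => B₁ i a) (fun a => -B₁ i a) c := by
    intro i c
    cases c <;> simp [mul_apply, liftV, mul_ite]
  have hP : matPos (B₁ * (liftV n₁)ᵀ) = Matrix.of fun i c =>
      Sum.elim (fun a => max (B₁ i a) 0) (fun a => max (-B₁ i a) 0) c := by
    ext i c; cases c <;> simp [matPos, hB]
  have hN : matNeg (B₁ * (liftV n₁)ᵀ) = Matrix.of fun i c =>
      Sum.elim (fun a => max (-B₁ i a) 0) (fun a => max (B₁ i a) 0) c := by
    ext i c; cases c <;> simp [matNeg, hB]
  rw [hP, hN]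
  ext j c
  simp only [mul_apply, Matrix.add_apply, transpose_apply, Matrix.neg_apply, Fintype.sum_sum_type,
    liftV, of_apply, ite_mul, one_mul, neg_one_mul, zero_mul,
    Finset.sum_ite_eq, Finset.mem_univ, if_true, Sum.elim_inl, Sum.elim_inr,
    mul_ite, mul_one, mul_neg_one, mul_zero, Finset.sum_ite_eq', neg_neg]
  cases c <;> rename_i v <;>
    simp only [Sum.elim_inl, Sum.elim_inr, mul_ite, mul_one, mul_neg_one, mul_zero,
      Finset.sum_ite_eq, Finset.mem_univ, if_true, neg_neg,
      ← Finset.sum_neg_distrib, ← Finset.sum_add_distrib] <;>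
    refine Finset.sum_congr rfl fun i _ => ?_
  · linear_combination (-(B₁ i v)) * max_zero_sub_max_neg_zero_eq_self (B₁ i j)
      - ((B₁ i j ⊔ 0) - (-B₁ i j ⊔ 0)) * max_zero_sub_max_neg_zero_eq_self (B₁ i v)
  · linear_combination (B₁ i v) * max_zero_sub_max_neg_zero_eq_self (B₁ i j)
      + ((B₁ i j ⊔ 0) - (-B₁ i j ⊔ 0)) * max_zero_sub_max_neg_zero_eq_self (B₁ i v)
end

section
/- Let B₂ ∈ ℝ^{n₁×n₂}, V = [I;-I] ∈ ℝ^{2n₁×n₁}, B̂₂ = VB₂ = [B₂; -B₂], and Âᵤ = B̂₂⁺(B̂₂⁻)^T + B̂₂⁻(B̂₂⁺)^T. Then V^T Âᵤ = -B₂B₂^T V^T, i.e., Âᵤ is a lifting of -B₂B₂^T. -/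
open Matrix

lemma max_sub_max (z : ℝ) : max z 0 - max (-z) 0 = z := by
  rcases le_total z 0 with h | h
  · simp [max_eq_right h, max_eq_left (neg_nonneg.mpr h)]
  · simp [max_eq_left h, max_eq_right (neg_nonpos.mpr h)]

lemma key (x y : ℝ) :
    (max x 0 * max (-y) 0 + max (-x) 0 * max y 0) -
      (max x 0 * max y 0 + max (-x) 0 * max (-y) 0) = -(x * y) := by
  have hx := max_sub_max x
  have hy := max_sub_max y
  set P := max x 0; set N := max (-x) 0; set Q := max y 0; set R := max (-y) 0
  linear_combination (-y) * hx - (P - N) * hy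

lemma liftV_sum (n : ℕ) (a : Fin n) (f : (Fin n ⊕ Fin n) → ℝ) :
    ∑ i, (liftV n)ᵀ a i * f i = f (Sum.inl a) - f (Sum.inr a) := by
  rw [Fintype.sum_sum_type]
  simp [liftV, ite_mul, sub_eq_add_neg]

/-- With `B̂₂ = VB₂` and `Âᵤ = B̂₂⁺(B̂₂⁻)ᵀ + B̂₂⁻(B̂₂⁺)ᵀ`, the matrix `Âᵤ` is a lifting
of `-B₂B₂ᵀ`, i.e. `Vᵀ Âᵤ = -B₂B₂ᵀ Vᵀ`. -/
theorem stmt_5 (n₁ n₂ : ℕ) (B₂ : Matrix (Fin n₁) (Fin n₂) ℝ) :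
    (liftV n₁)ᵀ *
      (matPos (liftV n₁ * B₂) * (matNeg (liftV n₁ * B₂))ᵀ +
       matNeg (liftV n₁ * B₂) * (matPos (liftV n₁ * B₂))ᵀ) =
    (-(B₂ * B₂ᵀ)) * (liftV n₁)ᵀ := by
  set M := liftV n₁ * B₂ with hM
  have hB1 : ∀ a j, M (Sum.inl a) j = B₂ a j := by
    intro a j
    simp [hM, Matrix.mul_apply, liftV, Finset.sum_ite_eq, ite_mul]
  have hB2 : ∀ a j, M (Sum.inr a) j = -B₂ a j := by
    intro a j
    simp [hM, Matrix.mul_apply, liftV, Finset.sum_ite_eq, ite_mul]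
  ext a j
  rw [Matrix.mul_apply, liftV_sum]
  simp only [Matrix.add_apply, Matrix.mul_apply, Matrix.transpose_apply, matPos, matNeg,
    Matrix.of_apply, hB1, hB2, Matrix.neg_apply, neg_neg,
    liftV, mul_ite, mul_one, mul_neg_one, mul_zero]
  cases j with
  | inl b =>
    simp only [hB1, hB2, mul_ite, mul_one, mul_neg_one, mul_zero, neg_neg,
      Finset.sum_ite_eq, Finset.mem_univ, if_true]
    rw [← Finset.sum_add_distrib, ← Finset.sum_add_distrib, ← Finset.sum_sub_distrib]
    rw [← Finset.sum_neg_distrib]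
    exact Finset.sum_congr rfl fun k _ => by linarith [key (B₂ a k) (B₂ b k)]
  | inr b =>
    simp only [hB1, hB2, mul_ite, mul_one, mul_neg_one, mul_zero, neg_neg,
      Finset.sum_ite_eq, Finset.mem_univ, if_true]
    rw [← Finset.sum_add_distrib, ← Finset.sum_add_distrib, ← Finset.sum_sub_distrib]
    exact Finset.sum_congr rfl fun k _ => by linarith [key (B₂ a k) (B₂ b k)]
end

section
/- Let B₁ ∈ ℝ^{n₀×n₁}, B₂ ∈ ℝ^{n₁×n₂} be boundary matrices with B₁B₂ = 0, and L₁ = B₁^TB₁ + B₂B₂^T the combinatorial Hodge 1-Laplacian. Then the matrix Â = (B̂₁⁻)^TB̂₁⁺ + (B̂₁⁺)^TB̂₁⁻ + B̂₂⁺(B̂₂⁻)^T + B̂₂⁻(B̂₂⁺)^T satisfies V^T Â = -L₁ V^T, and Â is symmetric with nonnegative entries. -/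
open Matrix

lemma posSubNeg {m k : Type*} (M : Matrix m k ℝ) : matPos M - matNeg M = M := by
  ext i j
  simp only [Matrix.sub_apply, matPos, matNeg, Matrix.of_apply]
  rw [max_def, max_def]; split_ifs <;> linarith

lemma mulVT {n₀ n : ℕ} (B : Matrix (Fin n₀) (Fin n) ℝ) :
    B * (liftV n)ᵀ = Matrix.of fun k i =>
      match i with | Sum.inl j => B k j | Sum.inr j => -B k j := by
  ext k i
  cases i with
  | inl j => simp [Matrix.mul_apply, liftV, eq_comm]
  | inr j => simp [Matrix.mul_apply, liftV, eq_comm]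

lemma vMul {n m : ℕ} (B : Matrix (Fin n) (Fin m) ℝ) :
    liftV n * B = Matrix.of fun i c =>
      match i with | Sum.inl j => B j c | Sum.inr j => -B j c := by
  ext i c
  cases i with
  | inl j => simp [Matrix.mul_apply, liftV]
  | inr j => simp [Matrix.mul_apply, liftV]

lemma vTmul {n : ℕ} {m : Type*} [Fintype m] (M : Matrix (Fin n ⊕ Fin n) m ℝ) :
    (liftV n)ᵀ * M = Matrix.of fun j c => M (Sum.inl j) c - M (Sum.inr j) c := by
  ext j c
  simp [Matrix.mul_apply, Fintype.sum_sum_type, liftV, sub_eq_add_neg]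

/-- Lifting of the combinatorial Hodge 1-Laplacian `L₁ = B₁ᵀB₁ + B₂B₂ᵀ`:
with `B̂₁ = B₁Vᵀ`, `B̂₂ = VB₂`, the matrix
`Â = (B̂₁⁻)ᵀB̂₁⁺ + (B̂₁⁺)ᵀB̂₁⁻ + B̂₂⁺(B̂₂⁻)ᵀ + B̂₂⁻(B̂₂⁺)ᵀ` satisfies `Vᵀ Â = -L₁ Vᵀ`,
and `Â` is symmetric with nonnegative entries. -/
theorem stmt_6 (n₀ n₁ n₂ : ℕ)
    (B₁ : Matrix (Fin n₀) (Fin n₁) ℝ) (B₂ : Matrix (Fin n₁) (Fin n₂) ℝ)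
    (hB : B₁ * B₂ = 0)
    (A : Matrix (Fin n₁ ⊕ Fin n₁) (Fin n₁ ⊕ Fin n₁) ℝ)
    (hA : A = (matNeg (B₁ * (liftV n₁)ᵀ))ᵀ * matPos (B₁ * (liftV n₁)ᵀ) +
              (matPos (B₁ * (liftV n₁)ᵀ))ᵀ * matNeg (B₁ * (liftV n₁)ᵀ) +
              matPos (liftV n₁ * B₂) * (matNeg (liftV n₁ * B₂))ᵀ +
              matNeg (liftV n₁ * B₂) * (matPos (liftV n₁ * B₂))ᵀ) :
    (liftV n₁)ᵀ * A = (-(B₁ᵀ * B₁ + B₂ * B₂ᵀ)) * (liftV n₁)ᵀ ∧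
    Aᵀ = A ∧
    (∀ i j, 0 ≤ A i j) := by
  set P := matPos (B₁ * (liftV n₁)ᵀ) with hPdef
  set N := matNeg (B₁ * (liftV n₁)ᵀ) with hNdef
  set Q := matPos (liftV n₁ * B₂) with hQdef
  set R := matNeg (liftV n₁ * B₂) with hRdef
  have h1 : (liftV n₁)ᵀ * Nᵀ = -B₁ᵀ := by
    rw [vTmul]; ext j k
    simp only [Matrix.of_apply, Matrix.transpose_apply, Matrix.neg_apply, hNdef, matNeg,
      mulVT, Matrix.of_apply]
    rw [max_def, max_def]; split_ifs <;> linarith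
  have h2 : (liftV n₁)ᵀ * Pᵀ = B₁ᵀ := by
    rw [vTmul]; ext j k
    simp only [Matrix.of_apply, Matrix.transpose_apply, hPdef, matPos, mulVT]
    rw [max_def, max_def]; split_ifs <;> linarith
  have h3 : (liftV n₁)ᵀ * Q = B₂ := by
    rw [vTmul]; ext j c
    simp only [Matrix.of_apply, hQdef, matPos, vMul]
    rw [max_def, max_def]; split_ifs <;> linarith
  have h4 : (liftV n₁)ᵀ * R = -B₂ := by
    rw [vTmul]; ext j c
    simp only [Matrix.of_apply, Matrix.neg_apply, hRdef, matNeg, vMul]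
    rw [max_def, max_def]; split_ifs <;> linarith
  refine ⟨?_, ?_, ?_⟩
  · rw [hA]
    have expand : (liftV n₁)ᵀ * (Nᵀ * P + Pᵀ * N + Q * Rᵀ + R * Qᵀ) =
        ((liftV n₁)ᵀ * Nᵀ) * P + ((liftV n₁)ᵀ * Pᵀ) * N
        + ((liftV n₁)ᵀ * Q) * Rᵀ + ((liftV n₁)ᵀ * R) * Qᵀ := by
      simp only [Matrix.mul_add, Matrix.mul_assoc]
    rw [expand, h1, h2, h3, h4]
    have hE : B₁ * (liftV n₁)ᵀ = P - N := (posSubNeg _).symm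
    have hF : liftV n₁ * B₂ = Q - R := (posSubNeg _).symm
    have : (-(B₁ᵀ * B₁ + B₂ * B₂ᵀ)) * (liftV n₁)ᵀ
        = -(B₁ᵀ * (P - N)) - B₂ * (Q - R)ᵀ := by
      rw [← hE, ← hF, Matrix.transpose_mul]
      simp only [Matrix.neg_mul, Matrix.add_mul, Matrix.mul_assoc]
      abel
    rw [this]
    simp only [Matrix.mul_sub, Matrix.sub_mul, Matrix.neg_mul, Matrix.transpose_sub]
    abel
  · rw [hA]
    simp only [Matrix.transpose_add, Matrix.transpose_mul, Matrix.transpose_transpose]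
    abel
  · intro i j
    rw [hA]
    have hPnn : ∀ a b, 0 ≤ P a b := fun a b => le_max_right _ _
    have hNnn : ∀ a b, 0 ≤ N a b := fun a b => le_max_right _ _
    have hQnn : ∀ a b, 0 ≤ Q a b := fun a b => le_max_right _ _
    have hRnn : ∀ a b, 0 ≤ R a b := fun a b => le_max_right _ _
    simp only [Matrix.add_apply, Matrix.mul_apply, Matrix.transpose_apply]
    refine add_nonneg (add_nonneg (add_nonneg ?_ ?_) ?_) ?_ <;>
      exact Finset.sum_nonneg fun k _ => mul_nonneg (by first | exact hPnn _ _ | exact hNnn _ _ | exact hQnn _ _ | exact hRnn _ _) (by first | exact hPnn _ _ | exact hNnn _ _ | exact hQnn _ _ | exact hRnn _ _)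
end

section
/- Let B₁B₂ = 0 and let D₂ ∈ ℝ^{n₁×n₁} be a positive definite diagonal matrix, D₁ a positive definite diagonal matrix of size n₀, D₃ = (1/3)I. Define the normalized Hodge 1-Laplacian ℒ₁ = D₂B₁^TD₁^{-1}B₁ + B₂D₃B₂^TD₂^{-1}. Then ℝ^{n₁} = im(B₂) ⊕ im(D₂B₁^T) ⊕ ker(ℒ₁), where the direct sum is orthogonal with respect to the inner product ⟨x,y⟩ = x^TD₂^{-1}y. -/
open Matrix

lemma mvd {m n : ℕ} (A : Matrix (Fin m) (Fin n) ℝ) (u : Fin n → ℝ) (w : Fin m → ℝ) :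
    (A *ᵥ u) ⬝ᵥ w = u ⬝ᵥ (Aᵀ *ᵥ w) := by
  rw [dotProduct_comm, dotProduct_mulVec, ← mulVec_transpose, dotProduct_comm]

lemma diag_dot_nonneg {n : ℕ} (e : Fin n → ℝ) (he : ∀ i, 0 ≤ e i) (a : Fin n → ℝ) :
    0 ≤ a ⬝ᵥ ((Matrix.diagonal e) *ᵥ a) := by
  simp only [dotProduct, Matrix.mulVec_diagonal]
  exact Finset.sum_nonneg fun i _ => by nlinarith [he i, sq_nonneg (a i)]

lemma diag_dot_zero {n : ℕ} (e : Fin n → ℝ) (he : ∀ i, 0 < e i) (a : Fin n → ℝ)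
    (h : a ⬝ᵥ ((Matrix.diagonal e) *ᵥ a) = 0) : a = 0 := by
  simp only [dotProduct, Matrix.mulVec_diagonal] at h
  funext i
  have h2 := (Finset.sum_eq_zero_iff_of_nonneg
    (fun j _ => by nlinarith [(he j).le, sq_nonneg (a j)] : ∀ j ∈ Finset.univ, (0:ℝ) ≤ a j * (e j * a j))).mp h i (Finset.mem_univ i)
  have hei := he i
  have : e i * (a i * a i) = 0 := by ring_nf; ring_nf at h2; linarith
  have := (mul_eq_zero.mp this).resolve_left (ne_of_gt hei)
  simpa [mul_self_eq_zero] using this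

/-- Normalized Hodge decomposition: with `B₁B₂ = 0`, positive definite diagonal
`D₁, D₂`, `D₃ = (1/3)I`, and `ℒ₁ = D₂B₁ᵀD₁⁻¹B₁ + B₂D₃B₂ᵀD₂⁻¹`, the space
`ℝ^{n₁}` decomposes as `im(B₂) ⊕ im(D₂B₁ᵀ) ⊕ ker(ℒ₁)`, orthogonally with
respect to the inner product `⟨x,y⟩ = xᵀD₂⁻¹y`. -/
theorem stmt_11 (n₀ n₁ n₂ : ℕ)
    (B₁ : Matrix (Fin n₀) (Fin n₁) ℝ) (B₂ : Matrix (Fin n₁) (Fin n₂) ℝ)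
    (hB : B₁ * B₂ = 0)
    (d₁ : Fin n₀ → ℝ) (d₂ : Fin n₁ → ℝ)
    (hd₁ : ∀ i, 0 < d₁ i) (hd₂ : ∀ i, 0 < d₂ i)
    (L : Matrix (Fin n₁) (Fin n₁) ℝ)
    (hL : L = Matrix.diagonal d₂ * B₁ᵀ * (Matrix.diagonal fun i => (d₁ i)⁻¹) * B₁ +
              B₂ * (((1 : ℝ)/3) • (1 : Matrix (Fin n₂) (Fin n₂) ℝ)) * B₂ᵀ * (Matrix.diagonal fun i => (d₂ i)⁻¹)) :
    (∀ x ∈ LinearMap.range (Matrix.mulVecLin B₂),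
      ∀ y ∈ LinearMap.range (Matrix.mulVecLin (Matrix.diagonal d₂ * B₁ᵀ)),
        x ⬝ᵥ ((Matrix.diagonal fun i => (d₂ i)⁻¹) *ᵥ y) = 0) ∧
    (∀ x ∈ LinearMap.range (Matrix.mulVecLin B₂),
      ∀ z ∈ LinearMap.ker (Matrix.mulVecLin L),
        x ⬝ᵥ ((Matrix.diagonal fun i => (d₂ i)⁻¹) *ᵥ z) = 0) ∧
    (∀ y ∈ LinearMap.range (Matrix.mulVecLin (Matrix.diagonal d₂ * B₁ᵀ)),
      ∀ z ∈ LinearMap.ker (Matrix.mulVecLin L),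
        y ⬝ᵥ ((Matrix.diagonal fun i => (d₂ i)⁻¹) *ᵥ z) = 0) ∧
    LinearMap.range (Matrix.mulVecLin B₂) ⊔
      LinearMap.range (Matrix.mulVecLin (Matrix.diagonal d₂ * B₁ᵀ)) ⊔
      LinearMap.ker (Matrix.mulVecLin L) = ⊤ := by
  set W : Matrix (Fin n₁) (Fin n₁) ℝ := Matrix.diagonal (fun i => (d₂ i)⁻¹) with hW
  set D : Matrix (Fin n₁) (Fin n₁) ℝ := Matrix.diagonal d₂ with hD
  set E : Matrix (Fin n₀) (Fin n₀) ℝ := Matrix.diagonal (fun i => (d₁ i)⁻¹) with hE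
  have hWD : W * D = 1 := by
    rw [hW, hD, Matrix.diagonal_mul_diagonal]
    convert Matrix.diagonal_one
    exact inv_mul_cancel₀ (ne_of_gt (hd₂ _))
  have hDW : D * W = 1 := by
    rw [hW, hD, Matrix.diagonal_mul_diagonal]
    convert Matrix.diagonal_one
    exact mul_inv_cancel₀ (ne_of_gt (hd₂ _))
  have hWDv : ∀ v : Fin n₁ → ℝ, W *ᵥ (D *ᵥ v) = v := by
    intro v; rw [Matrix.mulVec_mulVec, hWD, Matrix.one_mulVec]
  have hDWv : ∀ v : Fin n₁ → ℝ, D *ᵥ (W *ᵥ v) = v := by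
    intro v; rw [Matrix.mulVec_mulVec, hDW, Matrix.one_mulVec]
  -- expansion of L *ᵥ z
  have hLv : ∀ z : Fin n₁ → ℝ,
      L *ᵥ z = D *ᵥ (B₁ᵀ *ᵥ (E *ᵥ (B₁ *ᵥ z))) + ((1:ℝ)/3) • (B₂ *ᵥ (B₂ᵀ *ᵥ (W *ᵥ z))) := by
    intro z
    rw [hL, Matrix.add_mulVec]
    congr 1
    · rw [← Matrix.mulVec_mulVec, ← Matrix.mulVec_mulVec, ← Matrix.mulVec_mulVec]
    · rw [Matrix.mul_smul, Matrix.smul_mul, Matrix.smul_mul, Matrix.mul_one,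
        Matrix.smul_mulVec, ← Matrix.mulVec_mulVec, ← Matrix.mulVec_mulVec]
  -- kernel characterization
  have hker : ∀ z : Fin n₁ → ℝ, L *ᵥ z = 0 → B₁ *ᵥ z = 0 ∧ B₂ᵀ *ᵥ (W *ᵥ z) = 0 := by
    intro z hz
    have h0 : (W *ᵥ z) ⬝ᵥ (L *ᵥ z) = 0 := by rw [hz, dotProduct_zero]
    rw [hLv z, dotProduct_add] at h0
    have t1 : (W *ᵥ z) ⬝ᵥ (D *ᵥ (B₁ᵀ *ᵥ (E *ᵥ (B₁ *ᵥ z))))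
        = (B₁ *ᵥ z) ⬝ᵥ (E *ᵥ (B₁ *ᵥ z)) := by
      rw [show (W *ᵥ z) ⬝ᵥ (D *ᵥ (B₁ᵀ *ᵥ (E *ᵥ (B₁ *ᵥ z))))
          = (D *ᵥ (W *ᵥ z)) ⬝ᵥ (B₁ᵀ *ᵥ (E *ᵥ (B₁ *ᵥ z))) by
        rw [mvd D (W *ᵥ z), Matrix.diagonal_transpose]]
      rw [hDWv, dotProduct_comm, mvd, Matrix.transpose_transpose, dotProduct_comm]
    have t2 : (W *ᵥ z) ⬝ᵥ (((1:ℝ)/3) • (B₂ *ᵥ (B₂ᵀ *ᵥ (W *ᵥ z))))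
        = ((1:ℝ)/3) * ((B₂ᵀ *ᵥ (W *ᵥ z)) ⬝ᵥ (B₂ᵀ *ᵥ (W *ᵥ z))) := by
      rw [dotProduct_smul, smul_eq_mul]
      congr 1
      rw [dotProduct_comm, mvd]
    rw [t1, t2] at h0
    have q1 : 0 ≤ (B₁ *ᵥ z) ⬝ᵥ (E *ᵥ (B₁ *ᵥ z)) :=
      diag_dot_nonneg _ (fun i => (inv_pos.mpr (hd₁ i)).le) _
    have q2 : 0 ≤ (B₂ᵀ *ᵥ (W *ᵥ z)) ⬝ᵥ (B₂ᵀ *ᵥ (W *ᵥ z)) := by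
      simp only [dotProduct]
      exact Finset.sum_nonneg fun i _ => mul_self_nonneg _
    constructor
    · exact diag_dot_zero _ (fun i => inv_pos.mpr (hd₁ i)) _ (by linarith)
    · exact dotProduct_self_eq_zero.mp (by linarith)
  refine ⟨?_, ?_, ?_, ?_⟩
  · rintro x ⟨u, rfl⟩ y ⟨v, rfl⟩
    rw [Matrix.mulVecLin_apply, Matrix.mulVecLin_apply, mvd, ← Matrix.mulVec_mulVec, hWDv,
      Matrix.mulVec_mulVec, ← Matrix.transpose_mul, hB, Matrix.transpose_zero,
      Matrix.zero_mulVec, dotProduct_zero]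
  · rintro x ⟨u, rfl⟩ z hz
    rw [LinearMap.mem_ker, Matrix.mulVecLin_apply] at hz
    obtain ⟨-, h2⟩ := hker z hz
    rw [Matrix.mulVecLin_apply, mvd, h2, dotProduct_zero]
  · rintro y ⟨v, rfl⟩ z hz
    rw [LinearMap.mem_ker, Matrix.mulVecLin_apply] at hz
    obtain ⟨h1, -⟩ := hker z hz
    rw [Matrix.mulVecLin_apply, mvd, Matrix.transpose_mul, Matrix.transpose_transpose,
      Matrix.diagonal_transpose, ← Matrix.mulVec_mulVec]
    rw [show Matrix.diagonal d₂ *ᵥ (W *ᵥ z) = z from hDWv z, h1, dotProduct_zero]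
  · -- span = ⊤
    set f := Matrix.mulVecLin L with hf
    have hrange : LinearMap.range f ≤
        LinearMap.range (Matrix.mulVecLin B₂) ⊔
          LinearMap.range (Matrix.mulVecLin (Matrix.diagonal d₂ * B₁ᵀ)) := by
      rintro x ⟨y, rfl⟩
      rw [show f y = L *ᵥ y from rfl, hLv y]
      apply Submodule.add_mem
      · apply Submodule.mem_sup_right
        exact ⟨E *ᵥ (B₁ *ᵥ y), by rw [Matrix.mulVecLin_apply, ← Matrix.mulVec_mulVec]⟩
      · apply Submodule.mem_sup_left
        exact Submodule.smul_mem _ _ ⟨B₂ᵀ *ᵥ (W *ᵥ y), rfl⟩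
    have hdisj : Disjoint (LinearMap.range f) (LinearMap.ker f) := by
      rw [Submodule.disjoint_def]
      rintro x ⟨y, rfl⟩ hx
      rw [LinearMap.mem_ker] at hx
      have hx' : L *ᵥ (f y) = 0 := hx
      obtain ⟨hb1, hb2⟩ := hker (f y) hx'
      have hzero : (f y) ⬝ᵥ (W *ᵥ (f y)) = 0 := by
        have expand : ∀ v : Fin n₁ → ℝ, (L *ᵥ y) ⬝ᵥ v
            = (D *ᵥ (B₁ᵀ *ᵥ (E *ᵥ (B₁ *ᵥ y)))) ⬝ᵥ v
              + ((1:ℝ)/3) * ((B₂ *ᵥ (B₂ᵀ *ᵥ (W *ᵥ y))) ⬝ᵥ v) := by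
          intro v
          rw [hLv y, add_dotProduct, smul_dotProduct, smul_eq_mul]
        have term1 : (D *ᵥ (B₁ᵀ *ᵥ (E *ᵥ (B₁ *ᵥ y)))) ⬝ᵥ (W *ᵥ (f y)) = 0 := by
          rw [mvd, Matrix.diagonal_transpose]
          rw [show Matrix.diagonal d₂ *ᵥ (W *ᵥ (f y)) = f y from hDWv (f y)]
          rw [mvd, Matrix.transpose_transpose]
          rw [show B₁ *ᵥ (f y) = 0 from hb1, dotProduct_zero]
        have term2 : (B₂ *ᵥ (B₂ᵀ *ᵥ (W *ᵥ y))) ⬝ᵥ (W *ᵥ (f y)) = 0 := by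
          rw [mvd]
          rw [show B₂ᵀ *ᵥ (W *ᵥ (f y)) = 0 from hb2, dotProduct_zero]
        rw [show (f y) ⬝ᵥ (W *ᵥ (f y)) = (L *ᵥ y) ⬝ᵥ (W *ᵥ (f y)) from rfl,
          expand, term1, term2, mul_zero, add_zero]
      have : f y = 0 := diag_dot_zero _ (fun i => inv_pos.mpr (hd₂ i)) _ hzero
      exact this
    have hsum : Module.finrank ℝ (LinearMap.range f) + Module.finrank ℝ (LinearMap.ker f)
        = Module.finrank ℝ (Fin n₁ → ℝ) := LinearMap.finrank_range_add_finrank_ker f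
    have htop : LinearMap.range f ⊔ LinearMap.ker f = ⊤ :=
      Submodule.eq_top_of_disjoint _ _ hsum.ge hdisj
    refine le_antisymm le_top ?_
    rw [← htop]
    exact sup_le_sup hrange le_rfl
end

section
/- With ℒ₁ = D₂B₁^TD₁^{-1}B₁ + B₂D₃B₂^TD₂^{-1} and ℒ₁ˢ = D₂^{-1/2}ℒ₁D₂^{1/2}, the matrix ℒ₁ˢ = D₂^{1/2}B₁^TD₁^{-1}B₁D₂^{1/2} + D₂^{-1/2}B₂D₃B₂^TD₂^{-1/2} is symmetric positive semidefinite, and hence all eigenvalues of ℒ₁ are real and nonnegative. -/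
open Matrix
open scoped ComplexOrder

lemma psd_map_aux {n : Type*} [Fintype n] [DecidableEq n] (M : Matrix n n ℝ)
    (h : M.PosSemidef) : (M.map (fun x : ℝ => (x : ℂ))).PosSemidef := by
  classical
  open scoped MatrixOrder in
  obtain ⟨B, hB⟩ := CStarAlgebra.nonneg_iff_eq_star_mul_self.mp h.nonneg
  have hmap : M.map (fun x : ℝ => (x : ℂ)) =
      (B.map (fun x : ℝ => (x : ℂ)))ᴴ * (B.map (fun x : ℝ => (x : ℂ))) := by
    rw [hB]
    ext i j
    simp [mul_apply, map_apply, conjTranspose_apply, star_eq_conjTranspose]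
  rw [hmap]
  exact posSemidef_conjTranspose_mul_self _

/-- With `ℒ₁ = D₂B₁ᵀD₁⁻¹B₁ + B₂D₃B₂ᵀD₂⁻¹` and `ℒ₁ˢ = D₂^{-1/2}ℒ₁D₂^{1/2}`,
the matrix `ℒ₁ˢ` equals `D₂^{1/2}B₁ᵀD₁⁻¹B₁D₂^{1/2} + D₂^{-1/2}B₂D₃B₂ᵀD₂^{-1/2}`,
is symmetric positive semidefinite, and hence all eigenvalues of `ℒ₁` (over ℂ)
are real and nonnegative. -/
theorem stmt_12 (n₀ n₁ n₂ : ℕ)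
    (B₁ : Matrix (Fin n₀) (Fin n₁) ℝ) (B₂ : Matrix (Fin n₁) (Fin n₂) ℝ)
    (d₁ : Fin n₀ → ℝ) (d₂ : Fin n₁ → ℝ)
    (hd₁ : ∀ i, 0 < d₁ i) (hd₂ : ∀ i, 0 < d₂ i)
    (L Ls : Matrix (Fin n₁) (Fin n₁) ℝ)
    (hL : L = Matrix.diagonal d₂ * B₁ᵀ * (Matrix.diagonal fun i => (d₁ i)⁻¹) * B₁ +
              B₂ * (((1 : ℝ)/3) • (1 : Matrix (Fin n₂) (Fin n₂) ℝ)) * B₂ᵀ *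
                (Matrix.diagonal fun i => (d₂ i)⁻¹))
    (hLs : Ls = (Matrix.diagonal fun i => (Real.sqrt (d₂ i))⁻¹) * L *
                (Matrix.diagonal fun i => Real.sqrt (d₂ i))) :
    Ls = (Matrix.diagonal fun i => Real.sqrt (d₂ i)) * B₁ᵀ *
           (Matrix.diagonal fun i => (d₁ i)⁻¹) * B₁ *
           (Matrix.diagonal fun i => Real.sqrt (d₂ i)) +
         (Matrix.diagonal fun i => (Real.sqrt (d₂ i))⁻¹) * B₂ *
           (((1 : ℝ)/3) • (1 : Matrix (Fin n₂) (Fin n₂) ℝ)) * B₂ᵀ *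
           (Matrix.diagonal fun i => (Real.sqrt (d₂ i))⁻¹) ∧
    Ls.IsSymm ∧ Ls.PosSemidef ∧
    (∀ (μ : ℂ) (v : Fin n₁ → ℂ), v ≠ 0 →
      (L.map (fun x : ℝ => (x : ℂ))) *ᵥ v = μ • v → μ.im = 0 ∧ 0 ≤ μ.re) := by
  have hd₂' : ∀ i, 0 < Real.sqrt (d₂ i) := fun i => Real.sqrt_pos.mpr (hd₂ i)
  -- diagonal identities
  have h1 : (Matrix.diagonal fun i => (Real.sqrt (d₂ i))⁻¹) * Matrix.diagonal d₂ =
      Matrix.diagonal fun i => Real.sqrt (d₂ i) := by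
    rw [diagonal_mul_diagonal]
    refine congrArg Matrix.diagonal (funext fun i => ?_)
    rw [inv_mul_eq_iff_eq_mul₀ (hd₂' i).ne']
    exact (Real.mul_self_sqrt (hd₂ i).le).symm
  have h2 : (Matrix.diagonal fun i => (d₂ i)⁻¹) * (Matrix.diagonal fun i => Real.sqrt (d₂ i)) =
      Matrix.diagonal fun i => (Real.sqrt (d₂ i))⁻¹ := by
    rw [diagonal_mul_diagonal]
    refine congrArg Matrix.diagonal (funext fun i => ?_)
    have hx := Real.mul_self_sqrt (hd₂ i).le
    field_simp
    rw [div_eq_div_iff (hd₂ i).ne' (hd₂' i).ne']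
    linarith
  have hLs' : Ls = (Matrix.diagonal fun i => Real.sqrt (d₂ i)) * B₁ᵀ *
           (Matrix.diagonal fun i => (d₁ i)⁻¹) * B₁ *
           (Matrix.diagonal fun i => Real.sqrt (d₂ i)) +
         (Matrix.diagonal fun i => (Real.sqrt (d₂ i))⁻¹) * B₂ *
           (((1 : ℝ)/3) • (1 : Matrix (Fin n₂) (Fin n₂) ℝ)) * B₂ᵀ *
           (Matrix.diagonal fun i => (Real.sqrt (d₂ i))⁻¹) := by
    rw [hLs, hL, mul_add, add_mul]
    congr 1
    · simp only [Matrix.mul_assoc]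
      rw [← Matrix.mul_assoc (Matrix.diagonal fun i => (Real.sqrt (d₂ i))⁻¹)
        (Matrix.diagonal d₂), h1]
    · simp only [Matrix.mul_assoc]
      rw [h2]
  -- positive semidefiniteness
  have hD1 : (Matrix.diagonal fun i => (d₁ i)⁻¹).PosSemidef :=
    posSemidef_diagonal_iff.mpr fun i => (inv_nonneg).mpr (hd₁ i).le
  have hD3 : (((1 : ℝ)/3) • (1 : Matrix (Fin n₂) (Fin n₂) ℝ)).PosSemidef := by
    rw [smul_one_eq_diagonal]
    exact posSemidef_diagonal_iff.mpr fun i => by norm_num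
  have hpsd : Ls.PosSemidef := by
    rw [hLs']
    apply Matrix.PosSemidef.add
    · have := hD1.mul_mul_conjTranspose_same ((Matrix.diagonal fun i => Real.sqrt (d₂ i)) * B₁ᵀ)
      have he : ((Matrix.diagonal fun i => Real.sqrt (d₂ i)) * B₁ᵀ)ᴴ =
          B₁ * (Matrix.diagonal fun i => Real.sqrt (d₂ i)) := by
        rw [conjTranspose_mul, conjTranspose_eq_transpose_of_trivial,
          conjTranspose_eq_transpose_of_trivial, transpose_transpose, diagonal_transpose]
      rw [he] at this
      simpa only [Matrix.mul_assoc] using this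
    · have := hD3.mul_mul_conjTranspose_same ((Matrix.diagonal fun i => (Real.sqrt (d₂ i))⁻¹) * B₂)
      have he : ((Matrix.diagonal fun i => (Real.sqrt (d₂ i))⁻¹) * B₂)ᴴ =
          B₂ᵀ * (Matrix.diagonal fun i => (Real.sqrt (d₂ i))⁻¹) := by
        rw [conjTranspose_mul, conjTranspose_eq_transpose_of_trivial,
          conjTranspose_eq_transpose_of_trivial, diagonal_transpose]
      rw [he] at this
      simpa only [Matrix.mul_assoc] using this
  have hsymm : Ls.IsSymm := by
    have := hpsd.1
    rwa [Matrix.IsHermitian, conjTranspose_eq_transpose_of_trivial] at this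
  refine ⟨hLs', hsymm, hpsd, ?_⟩
  intro μ v hv hvec
  -- complexified matrices
  set f : ℝ → ℂ := fun x => (x : ℂ) with hf
  set E : Matrix (Fin n₁) (Fin n₁) ℂ :=
    Matrix.diagonal (fun i => (Real.sqrt (d₂ i) : ℂ)) with hE
  set Einv : Matrix (Fin n₁) (Fin n₁) ℂ :=
    Matrix.diagonal (fun i => ((Real.sqrt (d₂ i))⁻¹ : ℂ)) with hEinv
  have hEEinv : E * Einv = 1 := by
    rw [hE, hEinv, diagonal_mul_diagonal, ← diagonal_one]
    exact congrArg Matrix.diagonal (funext fun i =>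
      mul_inv_cancel₀ (by exact_mod_cast (hd₂' i).ne'))
  have hEinvE : Einv * E = 1 := by
    rw [hE, hEinv, diagonal_mul_diagonal, ← diagonal_one]
    exact congrArg Matrix.diagonal (funext fun i =>
      inv_mul_cancel₀ (by exact_mod_cast (hd₂' i).ne'))
  have hLsmap : Ls.map f = Einv * L.map f * E := by
    rw [hLs]
    have : ∀ (A B : Matrix (Fin n₁) (Fin n₁) ℝ), (A * B).map f = A.map f * B.map f := by
      intro A B
      ext i j
      simp [map_apply, mul_apply, hf]
    rw [this, this]
    congr 1
    · congr 1
      · rw [hEinv]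
        ext i j
        by_cases hij : i = j <;> simp [map_apply, Matrix.diagonal_apply, hij, hf]
    · rw [hE]
      ext i j
      by_cases hij : i = j <;> simp [map_apply, Matrix.diagonal_apply, hij, hf]
  set w : Fin n₁ → ℂ := Einv *ᵥ v with hw
  have hvw : E *ᵥ w = v := by
    rw [hw, mulVec_mulVec, hEEinv, one_mulVec]
  have hw0 : w ≠ 0 := by
    intro h0
    apply hv
    rw [← hvw, h0, mulVec_zero]
  have hLsw : Ls.map f *ᵥ w = μ • w := by
    rw [hLsmap, ← mulVec_mulVec, ← mulVec_mulVec, hvw, hvec, hw]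
    rw [mulVec_smul]
  -- PSD of the complexification
  have hpsdC : (Ls.map f).PosSemidef := psd_map_aux Ls hpsd
  have hkey := hpsdC.dotProduct_mulVec_nonneg w
  rw [hLsw] at hkey
  have hdot : star w ⬝ᵥ (μ • w) = μ * ((∑ i, Complex.normSq (w i) : ℝ) : ℂ) := by
    rw [dotProduct_smul]
    congr 1
    rw [dotProduct]
    push_cast
    congr 1
    funext i
    simp [Pi.star_apply, Complex.normSq_eq_conj_mul_self]
  rw [hdot] at hkey
  set r : ℝ := ∑ i, Complex.normSq (w i) with hr
  have hrpos : 0 < r := by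
    rw [hr]
    obtain ⟨i, hi⟩ := Function.ne_iff.mp hw0
    have : 0 < Complex.normSq (w i) := by
      rwa [Complex.normSq_pos]
    exact Finset.sum_pos' (fun j _ => Complex.normSq_nonneg _) ⟨i, Finset.mem_univ i, this⟩
  rw [Complex.le_def] at hkey
  obtain ⟨hre, him⟩ := hkey
  simp only [Complex.zero_re, Complex.zero_im, Complex.mul_re, Complex.mul_im,
    Complex.ofReal_re, Complex.ofReal_im, mul_zero, zero_mul, sub_zero, add_zero] at hre him
  constructor
  · have : μ.im * r = 0 := by linarith [him]
    rcases mul_eq_zero.mp this with h | h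
    · exact h
    · exact absurd h hrpos.ne'
  · by_contra hneg
    push_neg at hneg
    have : μ.re * r < 0 := mul_neg_of_neg_of_pos hneg hrpos
    linarith
end

section
/- Suppose -½ℒ₁ V^T = V^T P̂ for a column-stochastic matrix P̂ ∈ ℝ^{2n₁×2n₁}. Then for any 0 < α < 1 and any μ ∈ ℝ^{2n₁}, the lifted PageRank solution π̂ of (I - αP̂)π̂ = (1-α)μ satisfies (I + (α/2)ℒ₁) V^T π̂ = (1-α) V^T μ; equivalently V^T π̂ = (β-2)(βI + ℒ₁)^{-1} V^T μ with β = 2/α. -/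
open Matrix

/-- If `-½ℒ₁Vᵀ = VᵀP̂` for a column-stochastic `P̂`, and `π̂` solves the lifted
PageRank equation `(I - αP̂)π̂ = (1-α)μ` for `0 < α < 1`, then
`(I + (α/2)ℒ₁) Vᵀπ̂ = (1-α) Vᵀμ`; equivalently, with `β = 2/α`,
`Vᵀπ̂ = (β-2)(βI + ℒ₁)⁻¹ Vᵀμ`. -/
theorem stmt_15 (n₁ : ℕ) (L : Matrix (Fin n₁) (Fin n₁) ℝ)
    (P : Matrix (Fin n₁ ⊕ Fin n₁) (Fin n₁ ⊕ Fin n₁) ℝ)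
    (hPnonneg : ∀ i j, 0 ≤ P i j)
    (hPstoch : ∀ j, ∑ i, P i j = 1)
    (hlift : (-(((1 : ℝ)/2) • L)) * (liftV n₁)ᵀ = (liftV n₁)ᵀ * P)
    (α : ℝ) (hα0 : 0 < α) (hα1 : α < 1)
    (μ : (Fin n₁ ⊕ Fin n₁) → ℝ) (πhat : (Fin n₁ ⊕ Fin n₁) → ℝ)
    (hπ : (1 - α • P) *ᵥ πhat = (1 - α) • μ) :
    (1 + (α/2) • L) *ᵥ ((liftV n₁)ᵀ *ᵥ πhat) = (1 - α) • ((liftV n₁)ᵀ *ᵥ μ) ∧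
    (liftV n₁)ᵀ *ᵥ πhat =
      (2/α - 2) • (((2/α) • (1 : Matrix (Fin n₁) (Fin n₁) ℝ) + L)⁻¹ *ᵥ
        ((liftV n₁)ᵀ *ᵥ μ)) := by
  set V := liftV n₁ with hV
  -- entrywise formula for L
  have hL : ∀ j k, L j k = -2 * (P (Sum.inl j) (Sum.inl k) - P (Sum.inr j) (Sum.inl k)) := by
    intro j k
    have h := congrFun (congrFun hlift j) (Sum.inl k)
    simp only [Matrix.mul_apply, Matrix.neg_apply, Matrix.smul_apply, Matrix.transpose_apply,
      hV, liftV, Matrix.of_apply, Fintype.sum_sum_type] at h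
    simp only [ite_mul, one_mul, neg_one_mul, zero_mul, mul_ite, mul_zero, smul_eq_mul] at h
    simp only [Finset.sum_ite_eq, Finset.sum_ite_eq', Finset.mem_univ, if_true, mul_one] at h
    linarith
  -- key matrix identity
  have hkey : (1 + (α/2) • L) * Vᵀ = Vᵀ * (1 - α • P) := by
    have h2 : L * Vᵀ = (-2 : ℝ) • (Vᵀ * P) := by
      rw [← hlift]
      ext i j
      simp only [Matrix.smul_apply, Matrix.mul_apply, Matrix.neg_apply, smul_eq_mul,
        Finset.mul_sum]
      apply Finset.sum_congr rfl
      intro m _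
      ring
    rw [Matrix.add_mul, Matrix.mul_sub, Matrix.one_mul, Matrix.mul_one,
      Matrix.smul_mul, h2, smul_smul, Matrix.mul_smul]
    rw [show α / 2 * (-2) = -α by ring, neg_smul, sub_eq_add_neg]
  have h1 : (1 + (α/2) • L) *ᵥ (Vᵀ *ᵥ πhat) = (1 - α) • (Vᵀ *ᵥ μ) := by
    rw [Matrix.mulVec_mulVec, hkey, ← Matrix.mulVec_mulVec, hπ, Matrix.mulVec_smul]
  refine ⟨h1, ?_⟩
  -- invertibility of M = 1 + (α/2) L
  set M := (1 : Matrix (Fin n₁) (Fin n₁) ℝ) + (α/2) • L with hM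
  have hdet : M.det ≠ 0 := by
    apply det_ne_zero_of_sum_col_lt_diag
    intro k
    set a : Fin n₁ → ℝ := fun j => P (Sum.inl j) (Sum.inl k) with ha
    set b : Fin n₁ → ℝ := fun j => P (Sum.inr j) (Sum.inl k) with hb
    have hsplit : (∑ j, a j) + (∑ j, b j) = 1 := by
      rw [← hPstoch (Sum.inl k), Fintype.sum_sum_type]
    have hMentry : ∀ i, M i k = (if i = k then (1:ℝ) else 0) - α * (a i - b i) := by
      intro i
      simp only [hM, Matrix.add_apply, Matrix.smul_apply, Matrix.one_apply, smul_eq_mul,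
        hL i k]
      ring_nf
      rfl
    have hab : ∀ i, |a i - b i| ≤ a i + b i := by
      intro i
      rw [abs_sub_le_iff]
      constructor <;> nlinarith [hPnonneg (Sum.inl i) (Sum.inl k), hPnonneg (Sum.inr i) (Sum.inl k)]
    have hsum : ∑ i ∈ Finset.univ.erase k, ‖M i k‖ ≤ α * (1 - (a k + b k)) := by
      calc ∑ i ∈ Finset.univ.erase k, ‖M i k‖
          ≤ ∑ i ∈ Finset.univ.erase k, α * (a i + b i) := by
            apply Finset.sum_le_sum
            intro i hi
            have hik : i ≠ k := Finset.ne_of_mem_erase hi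
            rw [hMentry i, if_neg hik, zero_sub, Real.norm_eq_abs, abs_neg, abs_mul,
              abs_of_pos hα0]
            exact mul_le_mul_of_nonneg_left (hab i) hα0.le
        _ = α * ∑ i ∈ Finset.univ.erase k, (a i + b i) := by rw [Finset.mul_sum]
        _ ≤ α * (1 - (a k + b k)) := by
            apply mul_le_mul_of_nonneg_left _ hα0.le
            have : ∑ i ∈ Finset.univ.erase k, (a i + b i)
                = (∑ i, (a i + b i)) - (a k + b k) :=
              Finset.sum_erase_eq_sub (Finset.mem_univ k)
            rw [this, Finset.sum_add_distrib, hsplit]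
    have hdiag : 1 - α * (a k + b k) ≤ ‖M k k‖ := by
      rw [hMentry k, if_pos rfl, Real.norm_eq_abs]
      have h1' : α * |a k - b k| ≤ α * (a k + b k) :=
        mul_le_mul_of_nonneg_left (hab k) hα0.le
      have h2' : |α * (a k - b k)| ≤ α * (a k + b k) := by
        rwa [abs_mul, abs_of_pos hα0]
      have := abs_sub_abs_le_abs_sub (1 : ℝ) (α * (a k - b k))
      calc 1 - α * (a k + b k) ≤ 1 - |α * (a k - b k)| := by linarith
        _ ≤ |1 - α * (a k - b k)| := by
            have := abs_sub_abs_le_abs_sub (1 : ℝ) (α * (a k - b k))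
            simpa using this
    have habk : 0 ≤ a k + b k :=
      add_nonneg (hPnonneg _ _) (hPnonneg _ _)
    calc ∑ i ∈ Finset.univ.erase k, ‖M i k‖ ≤ α * (1 - (a k + b k)) := hsum
      _ < 1 - α * (a k + b k) := by nlinarith
      _ ≤ ‖M k k‖ := hdiag
  -- second conclusion
  set N := (2/α) • (1 : Matrix (Fin n₁) (Fin n₁) ℝ) + L with hN
  have hNM : N = (2/α) • M := by
    rw [hN, hM, smul_add, smul_smul]
    congr 1
    rw [show (2/α) * (α/2) = 1 by field_simp, one_smul]
  have hαne : (2/α : ℝ) ≠ 0 := by positivity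
  have hdetN : N.det ≠ 0 := by
    rw [hNM, Matrix.det_smul]
    exact mul_ne_zero (pow_ne_zero _ hαne) hdet
  have hNunit : IsUnit N.det := isUnit_iff_ne_zero.mpr hdetN
  have hNx : N *ᵥ (Vᵀ *ᵥ πhat) = (2/α - 2) • (Vᵀ *ᵥ μ) := by
    rw [hNM, Matrix.smul_mulVec, h1, smul_smul]
    rw [show (2/α) * (1 - α) = 2/α - 2 by field_simp]
  have h3 := congrArg (fun v => N⁻¹ *ᵥ v) hNx
  simp only [Matrix.mulVec_smul] at h3
  rw [Matrix.mulVec_mulVec, Matrix.nonsing_inv_mul N hNunit, Matrix.one_mulVec] at h3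
  exact h3
end
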